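/- Let γ ∈ ℝ with γ < 0 or γ > 1, and let x̃ be a real root of x^3 + (2γ-1)x^2 + (γ(γ-1)-1)x + (1-2γ) = 0 with x̃ ∉ {1-γ, -γ}. Set φ = (1-γ)/(x̃+γ)^2 + γ/(x̃-(1-γ))^2. Then (1+φ)(1-φ) > 0. -/
import Mathlib

lemma quad_pos_aux {A B C x : ℝ} (hA : 0 < A) (hD : 0 < 4 * A * C - B ^ 2) :
    0 < A * x ^ 2 + B * x + C := by
  nlinarith [sq_nonneg (2 * A * x + B), mul_pos hA hA]

theorem stmt_17 (γ xt : ℝ) (hγ : γ < 0 ∨ γ > 1)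
    (hroot : xt ^ 3 + (2 * γ - 1) * xt ^ 2 + (γ * (γ - 1) - 1) * xt + (1 - 2 * γ) = 0)
    (hne1 : xt ≠ 1 - γ) (hne2 : xt ≠ -γ) :
    (1 + ((1 - γ) / (xt + γ) ^ 2 + γ / (xt - (1 - γ)) ^ 2)) *
      (1 - ((1 - γ) / (xt + γ) ^ 2 + γ / (xt - (1 - γ)) ^ 2)) > 0 := by
  have ha : xt + γ ≠ 0 := fun h => hne2 (by linarith)
  have hb : xt - (1 - γ) ≠ 0 := fun h => hne1 (by linarith)
  -- abbreviations for the quadratic coefficients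
  set Ag : ℝ := γ * (-6 + 15*γ - 19*γ^2 + 12*γ^3 - 3*γ^4 + γ^5) with hAgdef
  set Bg : ℝ := γ * (12 - 46*γ + 65*γ^2 - 55*γ^3 + 29*γ^4 - 7*γ^5 + 2*γ^6) with hBgdef
  set Cg : ℝ := γ * (-6 + 32*γ - 64*γ^2 + 63*γ^3 - 40*γ^4 + 18*γ^5 - 4*γ^6 + γ^7) with hCgdef
  have hgg : 0 < γ * (γ - 1) := by
    rcases hγ with h | h
    · nlinarith
    · nlinarith
  have hA4 : (0:ℝ) < γ^4 - 2*γ^3 + 10*γ^2 - 9*γ + 6 := by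
    nlinarith [sq_nonneg (γ^2 - γ), sq_nonneg (γ - 1/2)]
  have hAg : 0 < Ag := by
    have h1 : Ag = γ * (γ - 1) * (γ^4 - 2*γ^3 + 10*γ^2 - 9*γ + 6) := by
      rw [hAgdef]; ring
    rw [h1]
    exact mul_pos hgg hA4
  have hq6 : -3*γ^6 + 9*γ^5 - 53*γ^4 + 91*γ^3 - 208*γ^2 + 164*γ - 24 < 0 := by
    rcases hγ with h | h
    · have h0 : 0 < -γ := by linarith
      nlinarith [pow_pos h0 2, pow_pos h0 3, pow_pos h0 4, pow_pos h0 5, pow_pos h0 6]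
    · have h0 : 0 < γ - 1 := by linarith
      nlinarith [pow_pos h0 2, pow_pos h0 3, pow_pos h0 4, pow_pos h0 5, pow_pos h0 6]
  have hD : 0 < 4 * Ag * Cg - Bg ^ 2 := by
    have h1 : 4 * Ag * Cg - Bg ^ 2 =
        (γ * (γ - 1))^3 * (-( -3*γ^6 + 9*γ^5 - 53*γ^4 + 91*γ^3 - 208*γ^2 + 164*γ - 24)) := by
      rw [hAgdef, hBgdef, hCgdef]; ring
    rw [h1]
    exact mul_pos (pow_pos hgg 3) (by linarith)
  have hr : 0 < Ag * xt ^ 2 + Bg * xt + Cg := quad_pos_aux hAg hD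
  have hφeq : (1 + ((1 - γ) / (xt + γ) ^ 2 + γ / (xt - (1 - γ)) ^ 2)) *
      (1 - ((1 - γ) / (xt + γ) ^ 2 + γ / (xt - (1 - γ)) ^ 2)) =
      (((xt + γ)^2 * (xt - (1 - γ))^2)^2 -
        ((1 - γ) * (xt - (1 - γ))^2 + γ * (xt + γ)^2)^2) /
        ((xt + γ)^2 * (xt - (1 - γ))^2)^2 := by
    field_simp
    ring
  rw [hφeq]
  apply div_pos
  · have hE : ((xt + γ)^2 * (xt - (1 - γ))^2)^2 -
        ((1 - γ) * (xt - (1 - γ))^2 + γ * (xt + γ)^2)^2 =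
        Ag * xt ^ 2 + Bg * xt + Cg := by
      rw [hAgdef, hBgdef, hCgdef]
      linear_combination (xt^5 + xt^4*(6*γ-3) + xt^3*(15*γ^2-15*γ+4) +
        xt^2*(20*γ^3-30*γ^2+18*γ-4) + xt*(15*γ^4-30*γ^3+32*γ^2-17*γ+3) +
        (6*γ^5-15*γ^4+28*γ^3-27*γ^2+10*γ-1)) * hroot
    rw [hE]
    exact hr
  · positivity
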